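/- arXiv:1906.03712 — 4 statements merged into one kernel-verified Lean document; each statement's English description precedes it below -/
import Mathlib

section
/- For δ > 0, the pair of constant functions ρ = m₁/|Ω|, η = m₂/|Ω| is the unique minimiser of F_L(ρ,η) = ((1+δ)/2)∫_Ω(ρ+η)² dx − δ∫_Ω ρη dx over the set X of pairs of nonnegative L² functions with ∫_Ω ρ = m₁ and ∫_Ω η = m₂. -/
open MeasureTheory

/-- The local energy `F_L(ρ,η) = ((1+δ)/2)∫_Ω (ρ+η)² − δ∫_Ω ρη`. -/
noncomputable def FL (Ω : Set ℝ) (δ : ℝ) (ρ η : ℝ → ℝ) : ℝ :=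
  ((1+δ)/2) * (∫ x in Ω, (ρ x + η x)^2) - δ * ∫ x in Ω, ρ x * η x

/-- The admissible set X: nonnegative L² densities with prescribed masses. -/
def InX (Ω : Set ℝ) (m₁ m₂ : ℝ) (ρ η : ℝ → ℝ) : Prop :=
  MemLp ρ 2 (volume.restrict Ω) ∧ MemLp η 2 (volume.restrict Ω) ∧
  (∀ᵐ x ∂(volume.restrict Ω), 0 ≤ ρ x) ∧ (∀ᵐ x ∂(volume.restrict Ω), 0 ≤ η x) ∧
  (∫ x in Ω, ρ x) = m₁ ∧ (∫ x in Ω, η x) = m₂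

section Aux

variable {α : Type*} [MeasurableSpace α] {μ : Measure α} [IsFiniteMeasure μ]

/-- Quantitative Jensen/Cauchy–Schwarz: `∫ (f - c)² = ∫ f² - (∫ f)²/V` for the mean `c`. -/
lemma key_identity {f : α → ℝ} (hf : MemLp f 2 μ) {V : ℝ} (hV : (μ Set.univ).toReal = V)
    (hVpos : 0 < V) :
    ∫ x, (f x - (∫ y, f y ∂μ) / V)^2 ∂μ
      = (∫ x, (f x)^2 ∂μ) - (∫ x, f x ∂μ)^2 / V := by
  have hfi : Integrable f μ := hf.integrable (by norm_num)
  have hf2 : Integrable (fun x => (f x)^2) μ := hf.integrable_sq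
  set m := ∫ y, f y ∂μ with hm
  set c := m / V with hc
  have h1 : ∀ x, (f x - c)^2 = (f x)^2 - (2*c) * f x + c^2 := by intro x; ring
  calc ∫ x, (f x - c)^2 ∂μ
      = ∫ x, ((f x)^2 - (2*c) * f x + c^2) ∂μ := by simp_rw [h1]
    _ = (∫ x, (f x)^2 ∂μ) - (2*c) * m + c^2 * V := by
        have hB : Integrable (fun x => (2*c) * f x) μ := hfi.const_mul (2*c)
        have hA : Integrable (fun x => (f x)^2 - (2*c) * f x) μ := hf2.sub hB
        rw [integral_add hA (integrable_const _), integral_sub hf2 hB,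
          integral_const, measureReal_def, hV, integral_const_mul, smul_eq_mul]
        ring
    _ = (∫ x, (f x)^2 ∂μ) - m^2 / V := by
        rw [hc]; field_simp; ring

lemma key_lb {f : α → ℝ} (hf : MemLp f 2 μ) {V : ℝ} (hV : (μ Set.univ).toReal = V)
    (hVpos : 0 < V) :
    (∫ x, f x ∂μ)^2 / V ≤ ∫ x, (f x)^2 ∂μ := by
  have := key_identity hf hV hVpos
  have h0 : 0 ≤ ∫ x, (f x - (∫ y, f y ∂μ) / V)^2 ∂μ :=
    integral_nonneg fun x => sq_nonneg _
  linarith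

lemma key_eq {f : α → ℝ} (hf : MemLp f 2 μ) {V : ℝ} (hV : (μ Set.univ).toReal = V)
    (hVpos : 0 < V)
    (heq : ∫ x, (f x)^2 ∂μ = (∫ x, f x ∂μ)^2 / V) :
    f =ᵐ[μ] fun _ => (∫ y, f y ∂μ) / V := by
  have hid := key_identity hf hV hVpos
  rw [heq, sub_self] at hid
  have hfi : Integrable f μ := hf.integrable (by norm_num)
  have hint : Integrable (fun x => (f x - (∫ y, f y ∂μ) / V)^2) μ := by
    have : MemLp (fun x => f x - (∫ y, f y ∂μ) / V) 2 μ := hf.sub (memLp_const _)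
    exact this.integrable_sq
  have := (integral_eq_zero_iff_of_nonneg_ae
    (Filter.Eventually.of_forall fun x => sq_nonneg _) hint).mp hid
  filter_upwards [this] with x hx
  have : (f x - (∫ y, f y ∂μ) / V)^2 = 0 := hx
  have := pow_eq_zero_iff (n := 2) (by norm_num) |>.mp this
  simpa [sub_eq_zero] using this

end Aux

/-- For δ > 0, the pair of constants (m₁/|Ω|, m₂/|Ω|) is the unique minimiser of F_L over X. -/
theorem stmt2 (a b δ m₁ m₂ : ℝ) (hab : a < b) (hδ : 0 < δ) (hm₁ : 0 < m₁) (hm₂ : 0 < m₂) :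
    InX (Set.Ioo a b) m₁ m₂ (fun _ => m₁/(b-a)) (fun _ => m₂/(b-a)) ∧
    (∀ ρ η : ℝ → ℝ, InX (Set.Ioo a b) m₁ m₂ ρ η →
      FL (Set.Ioo a b) δ (fun _ => m₁/(b-a)) (fun _ => m₂/(b-a)) ≤ FL (Set.Ioo a b) δ ρ η) ∧
    (∀ ρ η : ℝ → ℝ, InX (Set.Ioo a b) m₁ m₂ ρ η →
      FL (Set.Ioo a b) δ ρ η = FL (Set.Ioo a b) δ (fun _ => m₁/(b-a)) (fun _ => m₂/(b-a)) →
      (ρ =ᵐ[volume.restrict (Set.Ioo a b)] fun _ => m₁/(b-a)) ∧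
      (η =ᵐ[volume.restrict (Set.Ioo a b)] fun _ => m₂/(b-a))) := by
  set Ω : Set ℝ := Set.Ioo a b with hΩ
  set μ := volume.restrict Ω with hμ
  have hba : 0 < b - a := sub_pos.mpr hab
  haveI : IsFiniteMeasure μ := by
    constructor
    rw [hμ, Measure.restrict_apply_univ, hΩ, Real.volume_Ioo]
    exact ENNReal.ofReal_lt_top
  have hV : (μ Set.univ).toReal = b - a := by
    rw [hμ, Measure.restrict_apply_univ, hΩ, Real.volume_Ioo, ENNReal.toReal_ofReal hba.le]
  -- integral of a constant
  have hconst : ∀ c : ℝ, (∫ _ : ℝ, c ∂μ) = (b - a) * c := by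
    intro c; rw [integral_const, measureReal_def, hV, smul_eq_mul]
  -- constants are in X
  have hmem : InX Ω m₁ m₂ (fun _ => m₁/(b-a)) (fun _ => m₂/(b-a)) := by
    refine ⟨memLp_const _, memLp_const _, ?_, ?_, ?_, ?_⟩
    · exact Filter.Eventually.of_forall fun _ => by positivity
    · exact Filter.Eventually.of_forall fun _ => by positivity
    · rw [← hμ, hconst]; field_simp
    · rw [← hμ, hconst]; field_simp
  -- value of FL at the constants
  have hFLconst : FL Ω δ (fun _ => m₁/(b-a)) (fun _ => m₂/(b-a))
      = (1/2) * ((m₁+m₂)^2/(b-a)) + (δ/2) * (m₁^2/(b-a) + m₂^2/(b-a)) := by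
    rw [FL, ← hμ]
    rw [hconst ((m₁/(b-a) + m₂/(b-a))^2), hconst (m₁/(b-a) * (m₂/(b-a)))]
    field_simp
    ring
  -- decomposition of FL for members of X
  have hdecomp : ∀ ρ η : ℝ → ℝ, InX Ω m₁ m₂ ρ η →
      FL Ω δ ρ η = (1/2) * (∫ x, (ρ x + η x)^2 ∂μ)
        + (δ/2) * ((∫ x, (ρ x)^2 ∂μ) + (∫ x, (η x)^2 ∂μ)) := by
    intro ρ η ⟨hρ, hη, _, _, _, _⟩
    have hq1 : Integrable (fun x => (ρ x)^2) μ := hρ.integrable_sq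
    have hq2 : Integrable (fun x => (η x)^2) μ := hη.integrable_sq
    have hs : Integrable (fun x => (ρ x + η x)^2) μ := (hρ.add hη).integrable_sq
    have hP : Integrable (fun x => ρ x * η x) μ := by
      have h : (fun x => ρ x * η x)
          = fun x => ((ρ x + η x)^2 - (ρ x)^2 - (η x)^2) / 2 := by
        funext x; ring
      rw [h]; exact ((hs.sub hq1).sub hq2).div_const 2
    have hexp : (∫ x, (ρ x + η x)^2 ∂μ)
        = (∫ x, (ρ x)^2 ∂μ) + (∫ x, (η x)^2 ∂μ) + 2 * ∫ x, ρ x * η x ∂μ := by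
      have h : ∀ x, (ρ x + η x)^2 = (ρ x)^2 + (η x)^2 + 2 * (ρ x * η x) := by
        intro x; ring
      simp_rw [h]
      have hC : Integrable (fun x => (ρ x)^2 + (η x)^2) μ := hq1.add hq2
      have hD : Integrable (fun x => 2 * (ρ x * η x)) μ := hP.const_mul 2
      rw [integral_add hC hD, integral_add hq1 hq2, integral_const_mul]
    rw [FL, ← hμ]
    rw [show (∫ x in Ω, (ρ x + η x)^2) = ∫ x, (ρ x + η x)^2 ∂μ from rfl,
      show (∫ x in Ω, ρ x * η x) = ∫ x, ρ x * η x ∂μ from rfl]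
    rw [hexp]; ring
  -- lower bounds
  have hbounds : ∀ ρ η : ℝ → ℝ, InX Ω m₁ m₂ ρ η →
      (m₁+m₂)^2/(b-a) ≤ (∫ x, (ρ x + η x)^2 ∂μ) ∧
      m₁^2/(b-a) ≤ (∫ x, (ρ x)^2 ∂μ) ∧ m₂^2/(b-a) ≤ (∫ x, (η x)^2 ∂μ) := by
    intro ρ η ⟨hρ, hη, _, _, hi1, hi2⟩
    have hρi : Integrable ρ μ := hρ.integrable (by norm_num)
    have hηi : Integrable η μ := hη.integrable (by norm_num)
    have hsum : (∫ x, (ρ x + η x) ∂μ) = m₁ + m₂ := by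
      rw [integral_add hρi hηi, hμ, hi1, hi2]
    constructor
    · have hse : MemLp (fun x => ρ x + η x) 2 μ := hρ.add hη
      have := key_lb hse hV hba
      rwa [hsum] at this
    constructor
    · have := key_lb hρ hV hba
      rw [show (∫ x, ρ x ∂μ) = m₁ from hi1] at this; exact this
    · have := key_lb hη hV hba
      rw [show (∫ x, η x ∂μ) = m₂ from hi2] at this; exact this
  refine ⟨hmem, ?_, ?_⟩
  · intro ρ η hX
    obtain ⟨h1, h2, h3⟩ := hbounds ρ η hX
    rw [hdecomp ρ η hX, hFLconst]
    nlinarith [hδ.le]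
  · intro ρ η hX heq
    obtain ⟨h1, h2, h3⟩ := hbounds ρ η hX
    rw [hdecomp ρ η hX, hFLconst] at heq
    obtain ⟨hρ, hη, _, _, hi1, hi2⟩ := hX
    have hq1 : (∫ x, (ρ x)^2 ∂μ) = m₁^2/(b-a) := by nlinarith
    have hq2 : (∫ x, (η x)^2 ∂μ) = m₂^2/(b-a) := by nlinarith
    constructor
    · have := key_eq hρ hV hba (by rw [show (∫ x, ρ x ∂μ) = m₁ from hi1]; exact hq1)
      rw [show (∫ y, ρ y ∂μ) = m₁ from hi1] at this; exact this
    · have := key_eq hη hV hba (by rw [show (∫ x, η x ∂μ) = m₂ from hi2]; exact hq2)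
      rw [show (∫ y, η y ∂μ) = m₂ from hi2] at this; exact this
end

section
/- Let Ω = (0,1) and δ ∈ (-1,0). Define ρⁿ(x) = Σ_{i=0}^{n-1} 1_{[2i/(2n), (2i+1)/(2n))}(x) (the indicator of the union of n evenly spaced intervals of width 1/(2n)) and ηⁿ = 1 − ρⁿ. Then ρⁿηⁿ = 0 a.e., ρⁿ ⇀ 1/2 and ηⁿ ⇀ 1/2 weakly in L²(0,1), F_L(ρⁿ,ηⁿ) = (1+δ)/2 for all n, but F_L(1/2, 1/2) = (1+δ)/2 − δ/4 > (1+δ)/2. Hence F_L is not sequentially weakly lower semicontinuous on L²(0,1)×L²(0,1). -/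
open MeasureTheory Filter

/-- The oscillating sequence: indicator of n evenly spaced intervals of width 1/(2n). -/
noncomputable def ρseq (n : ℕ) : ℝ → ℝ :=
  Set.indicator (⋃ i ∈ Finset.range n,
    Set.Ico ((2*(i:ℝ))/(2*(n:ℝ))) ((2*(i:ℝ)+1)/(2*(n:ℝ)))) 1

/-! ### Auxiliary lemmas -/

namespace Stmt5Aux

/-- The union of intervals underlying `ρseq`. -/
def U (n : ℕ) : Set ℝ := ⋃ i ∈ Finset.range n,
    Set.Ico ((2*(i:ℝ))/(2*(n:ℝ))) ((2*(i:ℝ)+1)/(2*(n:ℝ)))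

lemma Umeas (n : ℕ) : MeasurableSet (U n) :=
  MeasurableSet.biUnion (Finset.range n).countable_toSet (fun _ _ => measurableSet_Ico)

lemma rho_eq (n : ℕ) : ρseq n = Set.indicator (U n) 1 := rfl

lemma rho_cases (n : ℕ) (x : ℝ) : ρseq n x = 0 ∨ ρseq n x = 1 := by
  rw [rho_eq]
  by_cases h : x ∈ U n
  · right; simp [Set.indicator_of_mem h]
  · left; simp [Set.indicator_of_notMem h]

lemma rho_prod_zero (n : ℕ) (x : ℝ) : ρseq n x * (1 - ρseq n x) = 0 := by
  rcases rho_cases n x with h | h <;> rw [h] <;> ring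

lemma rho_meas (n : ℕ) : Measurable (ρseq n) := by
  rw [rho_eq]; exact (measurable_const.indicator (Umeas n))

lemma rho_bd (n : ℕ) (x : ℝ) : ‖ρseq n x - 1/2‖ ≤ 1 := by
  rw [rho_eq]
  by_cases h : x ∈ U n
  · simp [Set.indicator_of_mem h]; norm_num [abs_le]
  · simp [Set.indicator_of_notMem h]; norm_num [abs_le]

lemma rho_mul (n : ℕ) (φ : ℝ → ℝ) (x : ℝ) : ρseq n x * φ x = Set.indicator (U n) φ x := by
  rw [rho_eq]
  by_cases h : x ∈ U n <;> simp [Set.indicator_of_mem, Set.indicator_of_notMem, h]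

lemma integrable_prod (n : ℕ) {φ : ℝ → ℝ} {μ : Measure ℝ} (hφi : Integrable φ μ) :
    Integrable (fun x => (ρseq n x - 1/2) * φ x) μ :=
  hφi.bdd_mul (((rho_meas n).sub measurable_const).aestronglyMeasurable) (c := 1) (ae_of_all _ (rho_bd n))

lemma cells_cover (n : ℕ) (hn : 0 < n) :
    Set.Ico (0:ℝ) 1 = ⋃ i ∈ Finset.range n,
      Set.Ico ((2*(i:ℝ))/(2*(n:ℝ))) ((2*(i:ℝ)+2)/(2*(n:ℝ))) := by
  have hN : (0:ℝ) < n := by exact_mod_cast hn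
  ext x
  simp only [Set.mem_Ico, Set.mem_iUnion, Finset.mem_range, Finset.mem_coe]
  constructor
  · rintro ⟨h0, h1⟩
    refine ⟨⌊x * n⌋₊, ?_, ?_, ?_⟩
    · rw [Nat.floor_lt (by positivity)]
      calc x * n < 1 * n := by nlinarith
        _ = (n:ℝ) := one_mul _
    · rw [div_le_iff₀ (by positivity)]
      have := Nat.floor_le (a := x * n) (by positivity)
      nlinarith
    · rw [lt_div_iff₀ (by positivity)]
      have := Nat.lt_floor_add_one (x * n)
      nlinarith
  · rintro ⟨i, hi, h0, h1⟩
    have hi' : (i:ℝ) + 1 ≤ n := by exact_mod_cast hi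
    constructor
    · have : (0:ℝ) ≤ (2*(i:ℝ))/(2*n) := by positivity
      linarith
    · calc x < (2*(i:ℝ)+2)/(2*n) := h1
        _ ≤ (2*(n:ℝ))/(2*n) := by
          apply div_le_div_of_nonneg_right ?_ (by positivity)
          · linarith
        _ = 1 := div_self (by positivity)

lemma cell_inter_U (n : ℕ) (i : ℕ) (hi : i < n) :
    Set.Ico ((2*(i:ℝ))/(2*(n:ℝ))) ((2*(i:ℝ)+2)/(2*(n:ℝ))) ∩ U n
      = Set.Ico ((2*(i:ℝ))/(2*(n:ℝ))) ((2*(i:ℝ)+1)/(2*(n:ℝ))) := by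
  have hN : (0:ℝ) ≤ 2*n := by positivity
  ext x
  simp only [U, Set.mem_inter_iff, Set.mem_Ico, Set.mem_iUnion, Finset.mem_range]
  constructor
  · rintro ⟨⟨h0, h1⟩, j, hj, hj0, hj1⟩
    have hij : j = i := by
      by_contra hne
      rcases lt_or_gt_of_ne hne with h | h
      · have hle : (2*(j:ℝ)+1) ≤ 2*(i:ℝ) := by
          have : (j:ℝ) + 1 ≤ i := by exact_mod_cast h
          linarith
        have := div_le_div_of_nonneg_right (c := 2*(n:ℝ)) hle hN
        linarith
      · have hle : (2*(i:ℝ)+2) ≤ 2*(j:ℝ) := by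
          have : (i:ℝ) + 1 ≤ j := by exact_mod_cast h
          linarith
        have := div_le_div_of_nonneg_right (c := 2*(n:ℝ)) hle hN
        linarith
    subst hij
    exact ⟨hj0, hj1⟩
  · rintro ⟨h0, h1⟩
    have hle : (2*(i:ℝ)+1) ≤ 2*(i:ℝ)+2 := by linarith
    have h2 := div_le_div_of_nonneg_right (c := 2*(n:ℝ)) hle hN
    exact ⟨⟨h0, lt_of_lt_of_le h1 h2⟩, i, hi, h0, h1⟩

lemma cells_disj (n : ℕ) :
    Set.PairwiseDisjoint ↑(Finset.range n)
      (fun i : ℕ => Set.Ico ((2*(i:ℝ))/(2*(n:ℝ))) ((2*(i:ℝ)+2)/(2*(n:ℝ)))) := by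
  have hN : (0:ℝ) ≤ 2*n := by positivity
  intro i _ j _ hne
  apply Set.disjoint_left.2
  rintro x ⟨h0, h1⟩ ⟨h0', h1'⟩
  rcases lt_or_gt_of_ne hne with h | h
  · have hle : (2*(i:ℝ)+2) ≤ 2*(j:ℝ) := by
      have : (i:ℝ) + 1 ≤ j := by exact_mod_cast h
      linarith
    have := div_le_div_of_nonneg_right (c := 2*(n:ℝ)) hle hN
    linarith
  · have hle : (2*(j:ℝ)+2) ≤ 2*(i:ℝ) := by
      have : (j:ℝ) + 1 ≤ i := by exact_mod_cast h
      linarith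
    have := div_le_div_of_nonneg_right (c := 2*(n:ℝ)) hle hN
    linarith

lemma percell (n : ℕ) (i : ℕ) (hi : i < n) (φ : ℝ → ℝ)
    (hφc : Continuous φ) (hφi : Integrable φ volume) :
    ∫ x in Set.Ico ((2*(i:ℝ))/(2*(n:ℝ))) ((2*(i:ℝ)+2)/(2*(n:ℝ))), (ρseq n x - 1/2) * φ x
      = (1/2) * ∫ x in ((2*(i:ℝ))/(2*(n:ℝ)))..((2*(i:ℝ)+1)/(2*(n:ℝ))),
          (φ x - φ (x + 1/(2*(n:ℝ)))) := by
  have hN : (0:ℝ) ≤ 2*n := by positivity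
  set A : ℝ := (2*(i:ℝ))/(2*(n:ℝ)) with hA
  set M : ℝ := (2*(i:ℝ)+1)/(2*(n:ℝ)) with hM
  set B : ℝ := (2*(i:ℝ)+2)/(2*(n:ℝ)) with hB
  have hAM : A ≤ M := div_le_div_of_nonneg_right (by linarith) hN
  have hMB : M ≤ B := div_le_div_of_nonneg_right (by linarith) hN
  have hMAh : M = A + 1/(2*(n:ℝ)) := by rw [hA, hM, ← add_div]
  have hBMh : B = M + 1/(2*(n:ℝ)) := by rw [hB, hM, ← add_div]; ring_nf
  have hindi : Integrable (Set.indicator (U n) φ) volume := hφi.indicator (Umeas n)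
  have e1 : ∫ x in Set.Ico A B, (ρseq n x - 1/2) * φ x
      = (∫ x in Set.Ico A B, Set.indicator (U n) φ x) - (1/2) * ∫ x in Set.Ico A B, φ x := by
    rw [← integral_const_mul, ← integral_sub hindi.integrableOn
      ((hφi.integrableOn).const_mul _)]
    apply setIntegral_congr_fun measurableSet_Ico
    intro x _
    simp only
    rw [← rho_mul n φ x]
    ring
  rw [e1]
  have e2 : ∫ x in Set.Ico A B, Set.indicator (U n) φ x = ∫ x in Set.Ico A M, φ x := by
    rw [setIntegral_indicator (Umeas n), cell_inter_U n i hi]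
  have e3 : ∫ x in Set.Ico A B, φ x = (∫ x in Set.Ico A M, φ x) + ∫ x in Set.Ico M B, φ x := by
    rw [← Set.Ico_union_Ico_eq_Ico hAM hMB]
    exact setIntegral_union (Set.Ico_disjoint_Ico_same) measurableSet_Ico
      hφi.integrableOn hφi.integrableOn
  rw [e2, e3]
  have ic : ∀ a b : ℝ, a ≤ b → ∫ x in Set.Ico a b, φ x = ∫ x in a..b, φ x := by
    intro a b hab
    rw [setIntegral_congr_set Ico_ae_eq_Ioc, intervalIntegral.integral_of_le hab]
  rw [ic A M hAM, ic M B hMB]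
  have e5 : ∫ x in M..B, φ x = ∫ x in A..M, φ (x + 1/(2*(n:ℝ))) := by
    rw [intervalIntegral.integral_comp_add_right, ← hMAh, ← hBMh]
  rw [e5, intervalIntegral.integral_sub (hφc.intervalIntegrable _ _)
    ((Continuous.intervalIntegrable (by continuity) _ _) :
      IntervalIntegrable (fun x => φ (x + 1/(2*(n:ℝ)))) volume A M)]
  ring

lemma osc (φ : ℝ → ℝ) (hφc : Continuous φ) (hφs : HasCompactSupport φ) :
    Tendsto (fun n => ∫ x in Set.Ioo (0:ℝ) 1, (ρseq n x - 1/2) * φ x) atTop (nhds 0) := by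
  have hφi : Integrable φ volume := hφc.integrable_of_hasCompactSupport hφs
  rw [NormedAddCommGroup.tendsto_nhds_zero]
  intro ε hε
  have huc : UniformContinuous φ := hφs.uniformContinuous_of_continuous hφc
  obtain ⟨δ₀, hδ₀, huc'⟩ := Metric.uniformContinuous_iff.1 huc (ε/2) (by linarith)
  have hsmall : ∀ᶠ n : ℕ in atTop, (1:ℝ)/(2*(n:ℝ)) < δ₀ := by
    have h1 : Tendsto (fun n : ℕ => (1:ℝ)/(2*(n:ℝ))) atTop (nhds 0) := by
      have := tendsto_one_div_atTop_nhds_zero_nat.const_mul (1/2 : ℝ)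
      simpa [div_eq_mul_inv, mul_comm, mul_assoc, mul_left_comm] using this
    exact h1.eventually_lt_const hδ₀
  filter_upwards [eventually_ge_atTop 1, hsmall] with n hn1 hnsmall
  have hn : 0 < n := hn1
  have hNpos : (0:ℝ) < n := by exact_mod_cast hn
  set h : ℝ := 1/(2*(n:ℝ)) with hh
  have hhpos : 0 < h := by positivity
  have e0 : ∫ x in Set.Ioo (0:ℝ) 1, (ρseq n x - 1/2) * φ x
      = ∑ i ∈ Finset.range n, ∫ x in Set.Ico ((2*(i:ℝ))/(2*(n:ℝ))) ((2*(i:ℝ)+2)/(2*(n:ℝ))),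
          (ρseq n x - 1/2) * φ x := by
    rw [setIntegral_congr_set Ioo_ae_eq_Ico, cells_cover n hn]
    exact integral_biUnion_finset (Finset.range n) (fun _ _ => measurableSet_Ico)
      (cells_disj n) (fun _ _ => (integrable_prod n hφi).integrableOn)
  rw [e0]
  have key : ∀ i ∈ Finset.range n,
      ‖∫ x in Set.Ico ((2*(i:ℝ))/(2*(n:ℝ))) ((2*(i:ℝ)+2)/(2*(n:ℝ))),
          (ρseq n x - 1/2) * φ x‖ ≤ (1/2) * ((ε/2) * h) := by
    intro i hi
    rw [percell n i (Finset.mem_range.1 hi) φ hφc hφi]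
    rw [norm_mul]
    have hb : ‖∫ x in ((2*(i:ℝ))/(2*(n:ℝ)))..((2*(i:ℝ)+1)/(2*(n:ℝ))),
        (φ x - φ (x + h))‖ ≤ (ε/2) * |((2*(i:ℝ)+1)/(2*(n:ℝ))) - ((2*(i:ℝ))/(2*(n:ℝ)))| := by
      apply intervalIntegral.norm_integral_le_of_norm_le_const
      intro x _
      have : dist x (x + h) < δ₀ := by
        rw [Real.dist_eq, show x - (x + h) = -h by ring, abs_neg, abs_of_pos hhpos]
        exact hnsmall
      exact le_of_lt (huc' this)
    have habs : |((2*(i:ℝ)+1)/(2*(n:ℝ))) - ((2*(i:ℝ))/(2*(n:ℝ)))| = h := by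
      rw [div_sub_div_same]
      simp only [add_sub_cancel_left]
      rw [abs_of_pos hhpos]
    rw [habs] at hb
    have hn2 : ‖(1/2:ℝ)‖ = 1/2 := by norm_num
    rw [hn2]
    exact mul_le_mul_of_nonneg_left hb (by norm_num)
  calc ‖∑ i ∈ Finset.range n, ∫ x in Set.Ico ((2*(i:ℝ))/(2*(n:ℝ))) ((2*(i:ℝ)+2)/(2*(n:ℝ))),
        (ρseq n x - 1/2) * φ x‖
      ≤ ∑ i ∈ Finset.range n, (1/2) * ((ε/2) * h) :=
        (norm_sum_le _ _).trans (Finset.sum_le_sum key)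
    _ = (n:ℝ) * ((1/2) * ((ε/2) * h)) := by
        rw [Finset.sum_const, Finset.card_range, nsmul_eq_mul]
    _ = ε/8 := by rw [hh]; field_simp; ring
    _ < ε := by linarith

lemma weak (g : ℝ → ℝ) (hg : Integrable g (volume.restrict (Set.Ioo (0:ℝ) 1))) :
    Tendsto (fun n => ∫ x in Set.Ioo (0:ℝ) 1, (ρseq n x - 1/2) * g x) atTop (nhds 0) := by
  rw [NormedAddCommGroup.tendsto_nhds_zero]
  intro ε hε
  set G : ℝ → ℝ := (Set.Ioo (0:ℝ) 1).indicator g with hG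
  have hGi : Integrable G volume := (integrable_indicator_iff measurableSet_Ioo).2 hg
  obtain ⟨φ, hφs, hφe, hφc, hφi⟩ :=
    hGi.exists_hasCompactSupport_integral_sub_le (show (0:ℝ) < ε/4 by linarith)
  -- comparison of the two integrals
  have hcomp : ∀ n : ℕ, ‖(∫ x in Set.Ioo (0:ℝ) 1, (ρseq n x - 1/2) * g x)
      - ∫ x in Set.Ioo (0:ℝ) 1, (ρseq n x - 1/2) * φ x‖ ≤ ε/4 := by
    intro n
    rw [← integral_sub (integrable_prod n hg) (integrable_prod n hφi.integrableOn)]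
    have e : ∀ x : ℝ, (ρseq n x - 1/2) * g x - (ρseq n x - 1/2) * φ x
        = (ρseq n x - 1/2) * (g x - φ x) := fun x => by ring
    simp only [e]
    calc ‖∫ x in Set.Ioo (0:ℝ) 1, (ρseq n x - 1/2) * (g x - φ x)‖
        ≤ ∫ x in Set.Ioo (0:ℝ) 1, ‖(ρseq n x - 1/2) * (g x - φ x)‖ :=
          norm_integral_le_integral_norm _
      _ ≤ ∫ x in Set.Ioo (0:ℝ) 1, ‖g x - φ x‖ := by
          apply integral_mono ((integrable_prod n (hg.sub hφi.integrableOn)).norm)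
            ((hg.sub hφi.integrableOn).norm)
          intro x
          simp only [Pi.sub_apply, norm_mul]
          calc ‖ρseq n x - 1/2‖ * ‖g x - φ x‖ ≤ 1 * ‖g x - φ x‖ :=
                mul_le_mul_of_nonneg_right (rho_bd n x) (norm_nonneg _)
            _ = ‖g x - φ x‖ := one_mul _
      _ = ∫ x in Set.Ioo (0:ℝ) 1, ‖G x - φ x‖ := by
          apply setIntegral_congr_fun measurableSet_Ioo
          intro x hx
          simp only [hG, Set.indicator_of_mem hx]
      _ ≤ ∫ x, ‖G x - φ x‖ := by
          apply setIntegral_le_integral ((hGi.sub hφi).norm)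
          filter_upwards with x using norm_nonneg _
      _ ≤ ε/4 := hφe
  have hosc := osc φ hφc hφs
  rw [NormedAddCommGroup.tendsto_nhds_zero] at hosc
  filter_upwards [hosc (ε/2) (by linarith)] with n hn
  calc ‖∫ x in Set.Ioo (0:ℝ) 1, (ρseq n x - 1/2) * g x‖
      ≤ ‖(∫ x in Set.Ioo (0:ℝ) 1, (ρseq n x - 1/2) * g x)
          - ∫ x in Set.Ioo (0:ℝ) 1, (ρseq n x - 1/2) * φ x‖
        + ‖∫ x in Set.Ioo (0:ℝ) 1, (ρseq n x - 1/2) * φ x‖ := by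
          conv_lhs => rw [← sub_add_cancel (∫ x in Set.Ioo (0:ℝ) 1, (ρseq n x - 1/2) * g x)
              (∫ x in Set.Ioo (0:ℝ) 1, (ρseq n x - 1/2) * φ x)]
          exact norm_add_le _ _
    _ ≤ ε/4 + ε/2 := add_le_add (hcomp n) (le_of_lt hn)
    _ < ε := by linarith

end Stmt5Aux

open Stmt5Aux in
/-- For δ ∈ (-1,0): the segregated sequence (ρⁿ, 1−ρⁿ) converges weakly in L²(0,1) to
(1/2, 1/2), has constant energy (1+δ)/2, while the weak limit has strictly larger energy
(1+δ)/2 − δ/4; hence F_L is not sequentially weakly lower semicontinuous. -/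
theorem stmt5 (δ : ℝ) (hδ : δ ∈ Set.Ioo (-1 : ℝ) 0) :
    (∀ n : ℕ, ∀ᵐ x ∂(volume.restrict (Set.Ioo (0:ℝ) 1)),
      ρseq n x * (1 - ρseq n x) = 0) ∧
    (∀ g : ℝ → ℝ, MemLp g 2 (volume.restrict (Set.Ioo (0:ℝ) 1)) →
      Tendsto (fun n => ∫ x in Set.Ioo (0:ℝ) 1, ρseq n x * g x) atTop
        (nhds (∫ x in Set.Ioo (0:ℝ) 1, (1/2) * g x))) ∧
    (∀ g : ℝ → ℝ, MemLp g 2 (volume.restrict (Set.Ioo (0:ℝ) 1)) →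
      Tendsto (fun n => ∫ x in Set.Ioo (0:ℝ) 1, (1 - ρseq n x) * g x) atTop
        (nhds (∫ x in Set.Ioo (0:ℝ) 1, (1/2) * g x))) ∧
    (∀ n : ℕ, 1 ≤ n →
      FL (Set.Ioo (0:ℝ) 1) δ (ρseq n) (fun x => 1 - ρseq n x) = (1+δ)/2) ∧
    FL (Set.Ioo (0:ℝ) 1) δ (fun _ => 1/2) (fun _ => 1/2) = (1+δ)/2 - δ/4 ∧
    (1+δ)/2 < (1+δ)/2 - δ/4 := by
  obtain ⟨hδ1, hδ0⟩ := hδ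
  haveI : IsFiniteMeasure (volume.restrict (Set.Ioo (0:ℝ) 1)) := by
    constructor
    rw [Measure.restrict_apply_univ, Real.volume_Ioo]
    norm_num
  have hvol : (volume (Set.Ioo (0:ℝ) 1)).toReal = 1 := by
    rw [Real.volume_Ioo]; norm_num
  have hone : ∫ (_ : ℝ) in Set.Ioo (0:ℝ) 1, (1:ℝ) = 1 := by
    rw [setIntegral_const, measureReal_def, hvol, smul_eq_mul, one_mul]
  -- main weak convergence for ρseq
  have main : ∀ g : ℝ → ℝ, MemLp g 2 (volume.restrict (Set.Ioo (0:ℝ) 1)) →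
      Tendsto (fun n => ∫ x in Set.Ioo (0:ℝ) 1, ρseq n x * g x) atTop
        (nhds (∫ x in Set.Ioo (0:ℝ) 1, (1/2) * g x)) := by
    intro g hg
    have hgi : Integrable g (volume.restrict (Set.Ioo (0:ℝ) 1)) :=
      hg.integrable (by norm_num)
    have e : ∀ n : ℕ, ∫ x in Set.Ioo (0:ℝ) 1, ρseq n x * g x
        = (∫ x in Set.Ioo (0:ℝ) 1, (ρseq n x - 1/2) * g x)
          + ∫ x in Set.Ioo (0:ℝ) 1, (1/2) * g x := by
      intro n
      rw [← integral_add (integrable_prod n hgi) (hgi.const_mul _)]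
      apply setIntegral_congr_fun measurableSet_Ioo
      intro x _
      simp only
      ring
    simp only [e]
    have := (weak g hgi).add_const (∫ x in Set.Ioo (0:ℝ) 1, (1/2) * g x)
    simpa using this
  refine ⟨?_, main, ?_, ?_, ?_, ?_⟩
  · intro n
    filter_upwards with x using rho_prod_zero n x
  · -- weak convergence of 1 - ρseq
    intro g hg
    have hgi : Integrable g (volume.restrict (Set.Ioo (0:ℝ) 1)) :=
      hg.integrable (by norm_num)
    have e : ∀ n : ℕ, ∫ x in Set.Ioo (0:ℝ) 1, (1 - ρseq n x) * g x
        = (∫ x in Set.Ioo (0:ℝ) 1, g x) - ∫ x in Set.Ioo (0:ℝ) 1, ρseq n x * g x := by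
      intro n
      rw [← integral_sub hgi]
      · apply setIntegral_congr_fun measurableSet_Ioo
        intro x _
        simp only
        ring
      · have := integrable_prod n hgi
        have e2 : ∀ x : ℝ, ρseq n x * g x = (ρseq n x - 1/2) * g x + (1/2) * g x :=
          fun x => by ring
        simp only [e2]
        exact this.add (hgi.const_mul _)
    simp only [e]
    have h2 : (∫ x in Set.Ioo (0:ℝ) 1, g x) - ∫ x in Set.Ioo (0:ℝ) 1, (1/2) * g x
        = ∫ x in Set.Ioo (0:ℝ) 1, (1/2) * g x := by
      rw [integral_const_mul]
      ring
    rw [← h2]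
    exact (main g hg).const_sub _
  · -- constant energy
    intro n _
    unfold FL
    have e1 : ∫ x in Set.Ioo (0:ℝ) 1, (ρseq n x + (1 - ρseq n x))^2 = 1 := by
      have hpt : ∀ x : ℝ, (ρseq n x + (1 - ρseq n x))^2 = 1 := fun x => by ring
      calc ∫ x in Set.Ioo (0:ℝ) 1, (ρseq n x + (1 - ρseq n x))^2
          = ∫ (_ : ℝ) in Set.Ioo (0:ℝ) 1, (1:ℝ) := by simp only [hpt]
        _ = 1 := hone
    have e2 : ∫ x in Set.Ioo (0:ℝ) 1, ρseq n x * (1 - ρseq n x) = 0 := by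
      have : (fun x => ρseq n x * (1 - ρseq n x)) = fun _ : ℝ => (0:ℝ) := by
        funext x; exact rho_prod_zero n x
      rw [this, integral_zero]
    rw [e1, e2]
    ring
  · -- energy of the limit
    unfold FL
    have e1 : ∫ (_ : ℝ) in Set.Ioo (0:ℝ) 1, ((1:ℝ)/2 + 1/2)^2 = 1 := by
      rw [setIntegral_const, measureReal_def, hvol, smul_eq_mul, one_mul]; norm_num
    have e2 : ∫ (_ : ℝ) in Set.Ioo (0:ℝ) 1, ((1:ℝ)/2 * (1/2)) = 1/4 := by
      rw [setIntegral_const, measureReal_def, hvol, smul_eq_mul, one_mul]; norm_num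
    rw [e1, e2]
    ring
  · linarith
end

section
/- Let δ ∈ (-1,0) and (ρ,η) ∈ X a minimiser of F_L. Then |supp(ρ) ∩ supp(η)| = 0, i.e. ρη = 0 almost everywhere in Ω. -/
open MeasureTheory

/-- For δ ∈ (-1,0), any minimiser of F_L over X is segregated: ρη = 0 a.e. in Ω. -/
theorem stmt9 (a b δ m₁ m₂ : ℝ) (hab : a < b) (hδ : δ ∈ Set.Ioo (-1 : ℝ) 0)
    (hm₁ : 0 < m₁) (hm₂ : 0 < m₂) (ρ η : ℝ → ℝ)
    (hX : InX (Set.Ioo a b) m₁ m₂ ρ η)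
    (hmin : ∀ σ τ : ℝ → ℝ, InX (Set.Ioo a b) m₁ m₂ σ τ →
      FL (Set.Ioo a b) δ ρ η ≤ FL (Set.Ioo a b) δ σ τ) :
    ∀ᵐ x ∂(volume.restrict (Set.Ioo a b)), ρ x * η x = 0 := by
  obtain ⟨hρ2, hη2, hρ0, hη0, hρm, hηm⟩ := hX
  set Ω : Set ℝ := Set.Ioo a b with hΩ
  set μ := volume.restrict Ω with hμ
  haveI : IsFiniteMeasure μ := by
    constructor
    rw [hμ, Measure.restrict_apply_univ, hΩ, Real.volume_Ioo]
    exact ENNReal.ofReal_lt_top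
  set f : ℝ → ℝ := fun x => ρ x + η x with hf
  have hf2 : MemLp f 2 μ := hρ2.add hη2
  have hρint : Integrable ρ μ := hρ2.integrable one_le_two
  have hηint : Integrable η μ := hη2.integrable one_le_two
  have hfint : Integrable f μ := hρint.add hηint
  have hfm : (∫ x in Ω, f x) = m₁ + m₂ := by
    rw [hf]; simp only []
    rw [integral_add hρint hηint, hρm, hηm]
  have hf0 : ∀ᵐ x ∂μ, 0 ≤ f x := by
    filter_upwards [hρ0, hη0] with x h1 h2 using add_nonneg h1 h2
  set g : ℝ → ℝ := Ω.indicator f with hg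
  have hgint : Integrable g volume := by
    rw [hg, integrable_indicator_iff measurableSet_Ioo]; exact hfint
  set G : ℝ → ℝ := fun c => ∫ x in a..c, g x with hG
  have hGcont : Continuous G := hgint.continuous_primitive a
  have hGa : G a = 0 := by simp [hG]
  have hGb : G b = m₁ + m₂ := by
    rw [hG]; simp only []
    rw [intervalIntegral.integral_of_le hab.le, hg,
      setIntegral_indicator measurableSet_Ioo,
      Set.inter_eq_right.mpr Set.Ioo_subset_Ioc_self]
    exact hfm
  have hmem : m₁ ∈ Set.Icc (G a) (G b) := by
    rw [hGa, hGb]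
    exact ⟨hm₁.le, le_add_of_nonneg_right hm₂.le⟩
  obtain ⟨c, hc, hGc⟩ := intermediate_value_Icc hab.le hGcont.continuousOn hmem
  set σ : ℝ → ℝ := fun x => if x < c then f x else 0 with hσ
  set τ : ℝ → ℝ := fun x => if x < c then 0 else f x with hτ
  have hσind : σ = (Set.Iio c).indicator f := by
    funext x; rw [hσ, Set.indicator_apply]
    rcases lt_or_ge x c with h | h
    · simp [Set.mem_Iio, h]
    · simp [Set.mem_Iio, not_lt.mpr h, not_lt_of_ge h]
  have hτind : τ = (Set.Ici c).indicator f := by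
    funext x; rw [hτ, Set.indicator_apply]
    rcases lt_or_ge x c with h | h
    · simp [Set.mem_Ici, h, not_le.mpr h]
    · simp [Set.mem_Ici, h, not_lt.mpr h]
  have hστ : ∀ x, σ x + τ x = f x := by
    intro x; rw [hσ, hτ]; simp only []; split_ifs <;> ring
  have hprod : ∀ x, σ x * τ x = 0 := by
    intro x; rw [hσ, hτ]; simp only []; split_ifs <;> ring
  have hσ2 : MemLp σ 2 μ := by rw [hσind]; exact hf2.indicator measurableSet_Iio
  have hτ2 : MemLp τ 2 μ := by rw [hτind]; exact hf2.indicator measurableSet_Ici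
  have hσ0 : ∀ᵐ x ∂μ, 0 ≤ σ x := by
    filter_upwards [hf0] with x h1
    rw [hσ]; simp only []; split_ifs <;> simp [h1]
  have hτ0 : ∀ᵐ x ∂μ, 0 ≤ τ x := by
    filter_upwards [hf0] with x h1
    rw [hτ]; simp only []; split_ifs <;> simp [h1]
  have hσint : Integrable σ μ := hσ2.integrable one_le_two
  have hτint : Integrable τ μ := hτ2.integrable one_le_two
  -- mass of σ
  have haeq : (Set.Ioc a c ∩ Set.Ioo a b : Set ℝ) =ᵐ[volume] (Set.Ioo a c : Set ℝ) := by
    have h1 : (Set.Ioc a c : Set ℝ) =ᵐ[volume] (Set.Ioo a c : Set ℝ) :=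
      (Ioo_ae_eq_Ioc (μ := volume) (a := a) (b := c)).symm
    have h2 := h1.inter (Filter.EventuallyEq.refl _ (Set.Ioo a b : Set ℝ))
    refine h2.trans ?_
    rw [Set.inter_eq_left.mpr (Set.Ioo_subset_Ioo le_rfl hc.2)]
    exact Filter.EventuallyEq.refl _ _
  have hσm : (∫ x in Ω, σ x) = m₁ := by
    have e1 : (∫ x in Ω, σ x) = ∫ x in Ω ∩ Set.Iio c, f x := by
      rw [hσind, setIntegral_indicator measurableSet_Iio]
    have e2 : Ω ∩ Set.Iio c = Set.Ioo a c := by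
      rw [hΩ, Set.Ioo_inter_Iio, min_eq_right hc.2]
    have e3 : G c = ∫ x in Set.Ioo a c, f x := by
      rw [hG]; simp only []
      rw [intervalIntegral.integral_of_le hc.1, hg,
        setIntegral_indicator measurableSet_Ioo]
      exact setIntegral_congr_set haeq
    rw [e1, e2, ← e3, hGc]
  have hτm : (∫ x in Ω, τ x) = m₂ := by
    have : (∫ x in Ω, τ x) = ∫ x in Ω, (f x - σ x) := by
      refine integral_congr_ae (Filter.Eventually.of_forall fun x => ?_)
      show τ x = f x - σ x
      have := hστ x; linarith
    rw [this, integral_sub hfint hσint, hfm, hσm]; ring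
  have hXστ : InX Ω m₁ m₂ σ τ := ⟨hσ2, hτ2, hσ0, hτ0, hσm, hτm⟩
  have hle := hmin σ τ hXστ
  -- compute FL σ τ
  have h1 : (∫ x in Ω, (σ x + τ x)^2) = ∫ x in Ω, (ρ x + η x)^2 := by
    refine integral_congr_ae (Filter.Eventually.of_forall fun x => ?_)
    show (σ x + τ x)^2 = (ρ x + η x)^2
    have h := hστ x; simp only [hf] at h; rw [h]
  have h2 : (∫ x in Ω, σ x * τ x) = 0 := by
    have : (fun x => σ x * τ x) = fun _ => (0:ℝ) := funext hprod
    rw [this, integral_zero]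
  rw [FL, FL, h1, h2, mul_zero, sub_zero] at hle
  have hIle : (∫ x in Ω, ρ x * η x) ≤ 0 := by
    have hδ0 : δ < 0 := hδ.2
    nlinarith [hle]
  -- integrability of the product
  have hρη : Integrable (fun x => ρ x * η x) μ := by
    have h := hη2.smul (φ := ρ) hρ2 (r := 1)
      (hpqr := ⟨by rw [inv_one]; exact ENNReal.inv_two_add_inv_two⟩)
    rw [memLp_one_iff_integrable] at h
    exact h.congr (Filter.Eventually.of_forall fun x => by
      simp [Pi.smul_apply', smul_eq_mul])
  have hnn : ∀ᵐ x ∂μ, 0 ≤ ρ x * η x := by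
    filter_upwards [hρ0, hη0] with x h1 h2 using mul_nonneg h1 h2
  have hzero : (∫ x in Ω, ρ x * η x) = 0 :=
    le_antisymm hIle (integral_nonneg_of_ae hnn)
  have := (integral_eq_zero_iff_of_nonneg_ae hnn hρη).mp hzero
  filter_upwards [this] with x hx using hx
end

section
/- Let δ < -1. Then inf over X of F_L(ρ,η) = ((1+δ)/2)∫_Ω(ρ+η)² dx − δ∫_Ω ρη dx equals −∞: there exists a sequence (ρₙ,ηₙ) ∈ X with F_L(ρₙ,ηₙ) → −∞. -/
open MeasureTheory Filter

lemma aux_int (a b u v c : ℝ) (h1 : a ≤ u) (h2 : u ≤ v) (h3 : v ≤ b) :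
    ∫ x in Set.Ioo a b, (Set.Ioo u v).indicator (fun _ => c) x = (v - u) * c := by
  rw [integral_indicator measurableSet_Ioo,
      Measure.restrict_restrict measurableSet_Ioo,
      Set.inter_eq_self_of_subset_left (Set.Ioo_subset_Ioo h1 h3),
      setIntegral_const, Real.volume_real_Ioo_of_le h2]
  simp [smul_eq_mul]; try ring

lemma aux_memℒp (a b u v c : ℝ) :
    MemLp ((Set.Ioo u v).indicator (fun _ => c)) 2 (volume.restrict (Set.Ioo a b)) := by
  exact memLp_indicator_const 2 measurableSet_Ioo c
    (Or.inr (ne_of_lt (lt_of_le_of_lt (Measure.restrict_apply_le _ _) measure_Ioo_lt_top)))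

lemma aux_sq (S : Set ℝ) (c : ℝ) (x : ℝ) :
    (S.indicator (fun _ => c) x)^2 = S.indicator (fun _ => c^2) x := by
  by_cases hx : x ∈ S <;> simp [hx]

/-- For δ < −1 the infimum of F_L over X is −∞: there is a sequence in X whose
energy tends to −∞. -/
theorem stmt10 (a b δ m₁ m₂ : ℝ) (hab : a < b) (hδ : δ < -1)
    (hm₁ : 0 < m₁) (hm₂ : 0 < m₂) :
    ∃ ρ η : ℕ → ℝ → ℝ, (∀ n, InX (Set.Ioo a b) m₁ m₂ (ρ n) (η n)) ∧
      Tendsto (fun n => FL (Set.Ioo a b) δ (ρ n) (η n)) atTop atBot := by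
  set L := b - a with hL
  have hL0 : 0 < L := by simp [hL]; linarith
  -- widths and heights
  set e : ℕ → ℝ := fun n => L / (2 * ((n : ℝ) + 1)) with he
  have hk : ∀ n : ℕ, (0:ℝ) < (n : ℝ) + 1 := fun n => by positivity
  have he0 : ∀ n, 0 < e n := fun n => by positivity
  have heL : ∀ n, e n ≤ L / 2 := by
    intro n
    rw [he]
    rw [div_le_div_iff₀ (by positivity) (by positivity)]
    nlinarith [hk n, hL0]
  set c₁ : ℕ → ℝ := fun n => m₁ / e n with hc₁
  set c₂ : ℕ → ℝ := fun n => m₂ / e n with hc₂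
  set M : ℝ := (a + b) / 2 with hM
  refine ⟨fun n => (Set.Ioo a (a + e n)).indicator (fun _ => c₁ n),
          fun n => (Set.Ioo M (M + e n)).indicator (fun _ => c₂ n), ?_, ?_⟩
  · intro n
    have h1 : a ≤ a := le_refl a
    have h2 : a ≤ a + e n := by linarith [he0 n]
    have h3 : a + e n ≤ b := by have := heL n; linarith
    have h4 : a ≤ M := by rw [hM]; linarith
    have h5 : M ≤ M + e n := by linarith [he0 n]
    have h6 : M + e n ≤ b := by have := heL n; rw [hM]; linarith
    refine ⟨aux_memℒp _ _ _ _ _, aux_memℒp _ _ _ _ _, ?_, ?_, ?_, ?_⟩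
    · filter_upwards with x
      exact Set.indicator_nonneg (fun _ _ => by positivity) x
    · filter_upwards with x
      exact Set.indicator_nonneg (fun _ _ => by positivity) x
    · rw [aux_int a b a (a + e n) (c₁ n) h1 h2 h3]
      simp only [hc₁, add_sub_cancel_left]
      field_simp [(he0 n).ne']
    · rw [aux_int a b M (M + e n) (c₂ n) h4 h5 h6]
      simp only [hc₂, add_sub_cancel_left]
      field_simp [(he0 n).ne']
  · -- energy computation
    have key : ∀ n, FL (Set.Ioo a b) δ
        ((Set.Ioo a (a + e n)).indicator (fun _ => c₁ n))
        ((Set.Ioo M (M + e n)).indicator (fun _ => c₂ n))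
        = (1 + δ) * (m₁^2 + m₂^2) / L * ((n : ℝ) + 1) := by
      intro n
      have hdisj : ∀ x : ℝ, (Set.Ioo a (a + e n)).indicator (fun _ => c₁ n) x *
          (Set.Ioo M (M + e n)).indicator (fun _ => c₂ n) x = 0 := by
        intro x
        by_cases hx : x ∈ Set.Ioo a (a + e n)
        · have hxM : x ∉ Set.Ioo M (M + e n) := by
            intro hx2
            have := hx.2; have := hx2.1
            have hmid : a + e n ≤ M := by have := heL n; rw [hM]; linarith
            linarith
          simp [hxM]
        · simp [hx]
      have hsq : ∀ x : ℝ, ((Set.Ioo a (a + e n)).indicator (fun _ => c₁ n) x +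
          (Set.Ioo M (M + e n)).indicator (fun _ => c₂ n) x)^2 =
          (Set.Ioo a (a + e n)).indicator (fun _ => (c₁ n)^2) x +
          (Set.Ioo M (M + e n)).indicator (fun _ => (c₂ n)^2) x := by
        intro x
        have h := hdisj x
        have s1 := aux_sq (Set.Ioo a (a + e n)) (c₁ n) x
        have s2 := aux_sq (Set.Ioo M (M + e n)) (c₂ n) x
        nlinarith [h, s1, s2]
      have hint1 : Integrable ((Set.Ioo a (a + e n)).indicator (fun _ => (c₁ n)^2))
          (volume.restrict (Set.Ioo a b)) :=
        (aux_memℒp a b _ _ _).integrable (by norm_num)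
      have hint2 : Integrable ((Set.Ioo M (M + e n)).indicator (fun _ => (c₂ n)^2))
          (volume.restrict (Set.Ioo a b)) :=
        (aux_memℒp a b _ _ _).integrable (by norm_num)
      have h1 : a ≤ a := le_refl a
      have h2 : a ≤ a + e n := by linarith [he0 n]
      have h3 : a + e n ≤ b := by have := heL n; linarith
      have h4 : a ≤ M := by rw [hM]; linarith
      have h5 : M ≤ M + e n := by linarith [he0 n]
      have h6 : M + e n ≤ b := by have := heL n; rw [hM]; linarith
      rw [FL]
      simp only [hsq, hdisj]
      rw [integral_add hint1 hint2,
          aux_int a b a (a + e n) ((c₁ n)^2) h1 h2 h3,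
          aux_int a b M (M + e n) ((c₂ n)^2) h4 h5 h6]
      simp only [integral_zero, mul_zero, sub_zero, add_sub_cancel_left]
      have hen : e n ≠ 0 := ne_of_gt (he0 n)
      rw [hc₁, hc₂]
      field_simp [he]
      have hen2 : e n * (2 * ((n:ℝ) + 1)) = L := by
        simp only [he]
        field_simp [(hk n).ne']
      linear_combination (-(δ + 1)) * hen2
    simp only [key]
    have hC : (1 + δ) * (m₁^2 + m₂^2) / L < 0 := by
      exact div_neg_of_neg_of_pos (mul_neg_of_neg_of_pos (by linarith) (by positivity)) hL0
    have h2 : Tendsto (fun n : ℕ => ((n : ℝ) + 1)) atTop atTop :=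
      tendsto_atTop_add_const_right _ _ tendsto_natCast_atTop_atTop
    exact (h2.const_mul_atTop_of_neg hC)
end
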